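/- For every g ∈ Γ₊ there exist h₁, h₂ ∈ Γ₊ such that g = 2·h₁ + 3·h₂; that is, the positive cone Γ₊ is weakly divisible. -/
import Mathlib


/-- The positive cone `Γ₊` on `Γ = H ⊕ G`: elements whose second component lies in
`G₊ \ {0}`, together with `0`. -/
def gammaPos (H : Type*) {G : Type*} (Gpos : Set G) [AddCommGroup H] [AddCommGroup G] :
    Set (H × G) :=
  {x : H × G | x.2 ∈ Gpos ∧ x.2 ≠ 0} ∪ {0}

/-- Lemma 3.1(ii): the positive cone `Γ₊` is weakly divisible: every `g ∈ Γ₊` can be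
written as `g = 2·h₁ + 3·h₂` with `h₁, h₂ ∈ Γ₊`. -/
theorem stmt_2 {H G : Type*} [AddCommGroup H] [AddCommGroup G] [Module ℚ G]
    (Gpos : Set G)
    (hGadd : ∀ a ∈ Gpos, ∀ b ∈ Gpos, a + b ∈ Gpos)
    (hGcap : Gpos ∩ (-Gpos) = {0})
    (hGscale : ∀ g ∈ Gpos, g ≠ 0 → ∀ q : ℚ, 0 < q → q • g ∈ Gpos ∧ q • g ≠ 0) :
    ∀ g ∈ gammaPos H Gpos, ∃ h₁ ∈ gammaPos H Gpos, ∃ h₂ ∈ gammaPos H Gpos,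
      g = 2 • h₁ + 3 • h₂ := by
  intro g hg
  rcases hg with ⟨hpos, hne⟩ | hzero
  · refine ⟨(-g.1, (1/4 : ℚ) • g.2), ?_, (g.1, (1/6 : ℚ) • g.2), ?_, ?_⟩
    · exact Or.inl ⟨(hGscale g.2 hpos hne (1/4) (by norm_num)).1,
        (hGscale g.2 hpos hne (1/4) (by norm_num)).2⟩
    · exact Or.inl ⟨(hGscale g.2 hpos hne (1/6) (by norm_num)).1,
        (hGscale g.2 hpos hne (1/6) (by norm_num)).2⟩
    · apply Prod.ext
      · simp [Prod.smul_def]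
        abel
      · simp only [Prod.smul_def, Prod.snd_add, Prod.mk.injEq]
        module
  · refine ⟨0, Or.inr rfl, 0, Or.inr rfl, ?_⟩
    simpa using hzero
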